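/- If a word M of length t over alphabet {A,C,G} contains no two equal adjacent letters (no AA, CC, or GG factor), then the number of distinct subsequences of M is at least F(t+2) - 1, where F denotes Fibonacci numbers with F(1)=1, F(2)=2. -/

import Mathlib

open List

lemma key : ∀ n (M : List (Fin 3)), M.length ≤ n → M.Chain' (· ≠ ·) →
    Nat.fib (M.length + 3) - 1 ≤ M.sublists.toFinset.card := by
  intro n
  induction n using Nat.strong_induction_on with
  | _ n ih =>
  intro M hlen hM
  match M with
  | [] => simp; decide
  | [a] => simp; decide
  | a :: b :: M' =>
    rw [List.Chain', List.isChain_cons_cons] at hM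
    obtain ⟨hab, hM'⟩ := hM
    set S1 : Finset (List (Fin 3)) := ((b :: M').sublists.toFinset).image (a :: ·) with hS1
    set S2 : Finset (List (Fin 3)) := (M'.sublists.toFinset).image (b :: ·) with hS2
    have hsub : S1 ∪ S2 ∪ {[]} ⊆ (a :: b :: M').sublists.toFinset := by
      intro x hx
      simp only [Finset.mem_union, Finset.mem_singleton, hS1, hS2, Finset.mem_image,
        List.mem_toFinset, List.mem_sublists] at hx ⊢
      rcases hx with (⟨y, hy, rfl⟩ | ⟨y, hy, rfl⟩) | rfl
      · exact hy.cons₂ a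
      · exact (hy.cons₂ b).cons a
      · exact List.nil_sublist _
    have hd12 : Disjoint S1 S2 := by
      rw [Finset.disjoint_left]
      rintro x hx1 hx2
      simp only [hS1, hS2, Finset.mem_image] at hx1 hx2
      obtain ⟨y, _, rfl⟩ := hx1
      obtain ⟨z, _, hz⟩ := hx2
      injection hz with h1 h2
      exact hab h1.symm
    have hdnil : Disjoint (S1 ∪ S2) ({[]} : Finset (List (Fin 3))) := by
      rw [Finset.disjoint_right]
      rintro x hx hx2
      simp only [Finset.mem_singleton] at hx
      subst hx
      simp only [hS1, hS2, Finset.mem_union, Finset.mem_image] at hx2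
      rcases hx2 with ⟨y, _, h⟩ | ⟨y, _, h⟩ <;> exact List.cons_ne_nil _ _ h
    have hcard : S1.card + S2.card + 1 ≤ (a :: b :: M').sublists.toFinset.card := by
      calc S1.card + S2.card + 1
          = (S1 ∪ S2 ∪ {[]}).card := by
            rw [Finset.card_union_of_disjoint hdnil, Finset.card_union_of_disjoint hd12,
              Finset.card_singleton]
        _ ≤ _ := Finset.card_le_card hsub
    have hc1 : S1.card = ((b :: M').sublists.toFinset).card :=
      Finset.card_image_of_injective _ (fun x y h => by injection h)
    have hc2 : S2.card = (M'.sublists.toFinset).card :=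
      Finset.card_image_of_injective _ (fun x y h => by injection h)
    have hn : 2 ≤ n := le_trans (by simp) hlen
    have h1 : Nat.fib ((b :: M').length + 3) - 1 ≤ ((b :: M').sublists.toFinset).card := by
      apply ih (n - 1) (by omega) _ (by simp at hlen ⊢; omega) hM'
    have h2 : Nat.fib (M'.length + 3) - 1 ≤ (M'.sublists.toFinset).card := by
      apply ih (n - 1) (by omega) _ (by simp at hlen ⊢; omega) hM'.tail
    have hfib : Nat.fib ((a :: b :: M').length + 3) =
        Nat.fib ((b :: M').length + 3) + Nat.fib (M'.length + 3) := by
      simp only [List.length_cons]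
      have : M'.length + 1 + 1 + 3 = (M'.length + 3) + 2 := by omega
      rw [this, Nat.fib_add_two]
      ring_nf
    have hpos : 0 < Nat.fib (M'.length + 3) := Nat.fib_pos.mpr (by omega)
    have hpos2 : 0 < Nat.fib ((b :: M').length + 3) := Nat.fib_pos.mpr (by omega)
    omega

theorem stmt8 (t : ℕ) (M : List (Fin 3)) (hlen : M.length = t)
    (hM : M.Chain' (· ≠ ·)) :
    Nat.fib (t + 3) - 1 ≤ {x : List (Fin 3) | x <+ M}.ncard := by
  have hset : {x : List (Fin 3) | x <+ M} = ↑(M.sublists.toFinset) := by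
    ext x; simp [List.mem_sublists]
  rw [hset, Set.ncard_coe_finset, ← hlen]
  exact key M.length M le_rfl hM
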